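/- Let ℓ ≥ 6 be an integer, let G be a graph, and let v, v_0, v_1, …, v_ℓ, v_{ℓ+1} be distinct vertices of G such that P = (v_1, …, v_ℓ) is a path in G and the neighborhood of v_i in G is exactly {v_{i−1}, v, v_{i+1}} for each i with 1 ≤ i ≤ ℓ. Let k ≥ 3 and let D be a proper k-orientation of the graph G − E(P) (G with the edges of the path P removed) such that the edge v v_i is oriented toward v_i for every i with 1 ≤ i ≤ ℓ, d⁻_D(v_1) ∈ {1, 2}, d⁻_D(v_ℓ) = 2, and d⁻_D(v) ≥ 4. Then D can be extended, by orienting the edges of P, into a proper k-orientation of G. -/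

import Mathlib

open SimpleGraph

structure Orient {V : Type*} (G : SimpleGraph V) where
  dir : V → V → Bool
  adj_of_dir : ∀ u v, dir u v = true → G.Adj u v
  dir_iff : ∀ u v, G.Adj u v → (dir u v = true ↔ ¬ dir v u = true)

def Orient.inDeg {V : Type*} [Fintype V] {G : SimpleGraph V} (D : Orient G) (v : V) : ℕ :=
  (Finset.univ.filter (fun u => D.dir u v = true)).card

def Orient.Proper {V : Type*} [Fintype V] {G : SimpleGraph V} (D : Orient G) : Prop :=
  ∀ u v, G.Adj u v → D.inDeg u ≠ D.inDeg v

attribute [local instance] Classical.propDecidable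

/-- orientation choice for path edge `w i — w (i+1)`: `pf ℓ i` means arc `w i → w (i+1)`. -/
def pf (ℓ i : ℕ) : Prop := (i < ℓ - 2 ∧ i % 2 = 1) ∨ (ℓ - 2 ≤ i ∧ i = ℓ - 2)

/-- `pd w ℓ a b` : the new orientation has an arc `a → b` along the path. -/
def pd {V : Type*} (w : ℕ → V) (ℓ : ℕ) (a b : V) : Prop :=
  ∃ i, 1 ≤ i ∧ i < ℓ ∧
    ((a = w i ∧ b = w (i + 1) ∧ pf ℓ i) ∨ (a = w (i + 1) ∧ b = w i ∧ ¬ pf ℓ i))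

def pS {V : Type*} (w : ℕ → V) (ℓ : ℕ) : Set (Sym2 V) :=
  {e | ∃ i, 1 ≤ i ∧ i < ℓ ∧ e = s(w i, w (i + 1))}

lemma pd_mem_pS {V : Type*} {w : ℕ → V} {ℓ : ℕ} {a b : V} (h : pd w ℓ a b) :
    s(a, b) ∈ pS w ℓ ∧ s(b, a) ∈ pS w ℓ := by
  obtain ⟨i, h1, h2, hc⟩ := h
  rcases hc with ⟨ha, hb, -⟩ | ⟨ha, hb, -⟩ <;> subst ha <;> subst hb
  · exact ⟨⟨i, h1, h2, rfl⟩, ⟨i, h1, h2, Sym2.eq_swap⟩⟩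
  · exact ⟨⟨i, h1, h2, Sym2.eq_swap⟩, ⟨i, h1, h2, rfl⟩⟩

lemma pd_asymm {V : Type*} {w : ℕ → V} {ℓ : ℕ}
    (winj : ∀ i j, i ≤ ℓ + 1 → j ≤ ℓ + 1 → w i = w j → i = j)
    {a b : V} (h : pd w ℓ a b) : ¬ pd w ℓ b a := by
  obtain ⟨i, hi1, hi2, hc⟩ := h
  rintro ⟨j, hj1, hj2, hc'⟩
  rcases hc with ⟨ha, hb, hf⟩ | ⟨ha, hb, hf⟩ <;>
    rcases hc' with ⟨ha', hb', hf'⟩ | ⟨ha', hb', hf'⟩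
  · have e1 := winj i (j + 1) (by omega) (by omega) (ha.symm.trans hb')
    have e2 := winj (i + 1) j (by omega) (by omega) (hb.symm.trans ha')
    omega
  · have e1 := winj i j (by omega) (by omega) (ha.symm.trans hb')
    exact hf' (e1 ▸ hf)
  · have e1 := winj (i + 1) (j + 1) (by omega) (by omega) (ha.symm.trans hb')
    have : i = j := by omega
    exact hf (this ▸ hf')
  · have e1 := winj (i + 1) j (by omega) (by omega) (ha.symm.trans hb')
    have e2 := winj i (j + 1) (by omega) (by omega) (hb.symm.trans ha')
    omega

lemma pd_cases {V : Type*} {w : ℕ → V} {ℓ : ℕ} {a b : V} (h : s(a, b) ∈ pS w ℓ) :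
    pd w ℓ a b ∨ pd w ℓ b a := by
  obtain ⟨i, h1, h2, he⟩ := h
  rcases Sym2.eq_iff.mp he with ⟨ha, hb⟩ | ⟨ha, hb⟩
  · by_cases hf : pf ℓ i
    · exact Or.inl ⟨i, h1, h2, Or.inl ⟨ha, hb, hf⟩⟩
    · exact Or.inr ⟨i, h1, h2, Or.inr ⟨hb, ha, hf⟩⟩
  · by_cases hf : pf ℓ i
    · exact Or.inr ⟨i, h1, h2, Or.inl ⟨hb, ha, hf⟩⟩
    · exact Or.inl ⟨i, h1, h2, Or.inr ⟨ha, hb, hf⟩⟩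

lemma dir_false_of_mem {V : Type*} [Fintype V] {G : SimpleGraph V} {ℓ : ℕ} {w : ℕ → V}
    (D : Orient (G.deleteEdges (pS w ℓ))) {a b : V} (h : s(a, b) ∈ pS w ℓ) :
    D.dir a b = false := by
  by_contra hc
  have hd : D.dir a b = true := by
    cases hdab : D.dir a b
    · exact absurd hdab hc
    · rfl
  have := D.adj_of_dir a b hd
  rw [SimpleGraph.deleteEdges_adj] at this
  exact this.2 h

noncomputable def extOrient {V : Type*} [Fintype V] (G : SimpleGraph V) (ℓ : ℕ) (w : ℕ → V)
    (D : Orient (G.deleteEdges (pS w ℓ)))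
    (winj : ∀ i j, i ≤ ℓ + 1 → j ≤ ℓ + 1 → w i = w j → i = j)
    (hGadj : ∀ i, 1 ≤ i → i < ℓ → G.Adj (w i) (w (i + 1))) : Orient G where
  dir a b := D.dir a b || decide (pd w ℓ a b)
  adj_of_dir a b h := by
    simp only [Bool.or_eq_true, decide_eq_true_eq] at h
    rcases h with h | h
    · exact (SimpleGraph.deleteEdges_adj.mp (D.adj_of_dir a b h)).1
    · obtain ⟨i, h1, h2, ⟨ha, hb, -⟩ | ⟨ha, hb, -⟩⟩ := h
      · subst ha; subst hb; exact hGadj i h1 h2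
      · subst ha; subst hb; exact (hGadj i h1 h2).symm
  dir_iff a b hab := by
    by_cases hp : pd w ℓ a b
    · have h1 : D.dir a b = false := dir_false_of_mem D (pd_mem_pS hp).1
      have h2 : D.dir b a = false := dir_false_of_mem D (pd_mem_pS hp).2
      have h3 : ¬ pd w ℓ b a := pd_asymm winj hp
      simp [h1, h2, hp, h3]
    · by_cases hq : pd w ℓ b a
      · have h1 : D.dir a b = false := dir_false_of_mem D (pd_mem_pS hq).2
        have h2 : D.dir b a = false := dir_false_of_mem D (pd_mem_pS hq).1
        simp [h1, h2, hp, hq]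
      · have hS : s(a, b) ∉ pS w ℓ := by
          intro hs
          rcases pd_cases hs with h | h
          exacts [hp h, hq h]
        have hadj' : (G.deleteEdges (pS w ℓ)).Adj a b := by
          rw [SimpleGraph.deleteEdges_adj]; exact ⟨hab, hS⟩
        have := D.dir_iff a b hadj'
        simp [hp, hq, this]

lemma extOrient_dir {V : Type*} [Fintype V] (G : SimpleGraph V) (ℓ : ℕ) (w : ℕ → V)
    (D : Orient (G.deleteEdges (pS w ℓ)))
    (winj : ∀ i j, i ≤ ℓ + 1 → j ≤ ℓ + 1 → w i = w j → i = j)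
    (hGadj : ∀ i, 1 ≤ i → i < ℓ → G.Adj (w i) (w (i + 1))) (a b : V) :
    (extOrient G ℓ w D winj hGadj).dir a b = (D.dir a b || decide (pd w ℓ a b)) := rfl

lemma extOrient_inDeg {V : Type*} [Fintype V] (G : SimpleGraph V) (ℓ : ℕ) (w : ℕ → V)
    (D : Orient (G.deleteEdges (pS w ℓ)))
    (winj : ∀ i j, i ≤ ℓ + 1 → j ≤ ℓ + 1 → w i = w j → i = j)
    (hGadj : ∀ i, 1 ≤ i → i < ℓ → G.Adj (w i) (w (i + 1))) (x : V) :
    (extOrient G ℓ w D winj hGadj).inDeg x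
      = D.inDeg x + (Finset.univ.filter fun u => pd w ℓ u x).card := by
  have hunion : (Finset.univ.filter fun u => (D.dir u x || decide (pd w ℓ u x)) = true)
      = (Finset.univ.filter fun u => D.dir u x = true)
        ∪ (Finset.univ.filter fun u => pd w ℓ u x) := by
    ext u
    simp [Bool.or_eq_true, decide_eq_true_eq]
  show (Finset.univ.filter fun u => (D.dir u x || decide (pd w ℓ u x)) = true).card = _
  rw [hunion, Finset.card_union_of_disjoint]
  · rfl
  · rw [Finset.disjoint_left]
    intro u hu1 hu2
    simp only [Finset.mem_filter, Finset.mem_univ, true_and] at hu1 hu2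
    have := dir_false_of_mem D (pd_mem_pS hu2).1
    rw [this] at hu1
    exact Bool.false_ne_true hu1


/-- Let `v, w 0, w 1, …, w ℓ, w (ℓ+1)` be distinct vertices with `ℓ ≥ 6`, such that the
neighbourhood of `w i` is exactly `{w (i-1), v, w (i+1)}` for `1 ≤ i ≤ ℓ`. Any proper
`k`-orientation (`k ≥ 3`) of `G` minus the edges of the path `(w 1, …, w ℓ)` in which
every edge `v (w i)` is oriented toward `w i`, `w 1` has indegree `1` or `2`, `w ℓ` has
indegree `2`, and `v` has indegree at least `4`, extends to a proper `k`-orientation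
of `G`. -/
theorem extend_orientation_along_path {V : Type*} [Fintype V] (G : SimpleGraph V)
    (ℓ k : ℕ) (hℓ : 6 ≤ ℓ) (hk : 3 ≤ k) (v : V) (w : ℕ → V)
    (hinj : Set.InjOn w (Set.Iic (ℓ + 1))) (hv : ∀ i ≤ ℓ + 1, w i ≠ v)
    (hnbr : ∀ i, 1 ≤ i → i ≤ ℓ → G.neighborSet (w i) = {w (i - 1), v, w (i + 1)})
    (D : Orient (G.deleteEdges {e | ∃ i, 1 ≤ i ∧ i < ℓ ∧ e = s(w i, w (i + 1))}))
    (hproper : D.Proper) (hkor : ∀ x, D.inDeg x ≤ k)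
    (hdirv : ∀ i, 1 ≤ i → i ≤ ℓ → D.dir v (w i) = true)
    (h1 : D.inDeg (w 1) = 1 ∨ D.inDeg (w 1) = 2)
    (hl : D.inDeg (w ℓ) = 2) (hvdeg : 4 ≤ D.inDeg v) :
    ∃ D' : Orient G, D'.Proper ∧ (∀ x, D'.inDeg x ≤ k) ∧
      ∀ a b, (G.deleteEdges {e | ∃ i, 1 ≤ i ∧ i < ℓ ∧ e = s(w i, w (i + 1))}).Adj a b →
        D'.dir a b = D.dir a b := by
  classical
  have winj : ∀ i j, i ≤ ℓ + 1 → j ≤ ℓ + 1 → w i = w j → i = j := fun i j hi hj h =>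
    hinj (Set.mem_Iic.mpr hi) (Set.mem_Iic.mpr hj) h
  have hGadj : ∀ i, 1 ≤ i → i < ℓ → G.Adj (w i) (w (i + 1)) := by
    intro i hi1 hi2
    have hn := hnbr i hi1 hi2.le
    have hmem : w (i + 1) ∈ G.neighborSet (w i) := by
      rw [hn]; right; right; rfl
    exact hmem
  have DD : Orient (G.deleteEdges (pS w ℓ)) := D
  -- identify D with DD (definitional)
  set D' : Orient G := extOrient G ℓ w D winj hGadj with hD'def
  have hkey : ∀ x, D'.inDeg x = D.inDeg x + (Finset.univ.filter fun u => pd w ℓ u x).card :=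
    extOrient_inDeg G ℓ w D winj hGadj
  -- vertices not on the path keep their in-degree
  have hnotpathv : ∀ x : V, (∀ j, 1 ≤ j → j ≤ ℓ → x ≠ w j) → D'.inDeg x = D.inDeg x := by
    intro x hx
    rw [hkey]
    have he : (Finset.univ.filter fun u => pd w ℓ u x) = ∅ := by
      rw [Finset.filter_eq_empty_iff]
      intro u _
      rintro ⟨i, hi1, hi2, ⟨-, hb, -⟩ | ⟨-, hb, -⟩⟩
      · exact hx (i + 1) (by omega) (by omega) hb
      · exact hx i hi1 (by omega) hb
    rw [he]
    simp
  -- in-degree increment at path vertices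
  have hincw : ∀ j, 1 ≤ j → j ≤ ℓ →
      (Finset.univ.filter fun u => pd w ℓ u (w j)).card
        = (if 2 ≤ j ∧ pf ℓ (j - 1) then 1 else 0) + (if j < ℓ ∧ ¬ pf ℓ j then 1 else 0) := by
    intro j hj1 hjℓ
    have hset : (Finset.univ.filter fun u => pd w ℓ u (w j))
        = ((if 2 ≤ j ∧ pf ℓ (j - 1) then {w (j - 1)} else ∅)
            ∪ (if j < ℓ ∧ ¬ pf ℓ j then {w (j + 1)} else ∅) : Finset V) := by
      ext u
      simp only [Finset.mem_filter, Finset.mem_univ, true_and, Finset.mem_union]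
      constructor
      · rintro ⟨i, hi1, hi2, ⟨ha, hb, hf⟩ | ⟨ha, hb, hf⟩⟩
        · have hji : j = i + 1 := winj j (i + 1) (by omega) (by omega) hb
          left
          have hj1i : j - 1 = i := by omega
          rw [if_pos ⟨by omega, by rwa [hj1i]⟩]
          rw [Finset.mem_singleton, hj1i]
          exact ha
        · have hji : j = i := winj j i (by omega) (by omega) hb
          right
          rw [if_pos ⟨by omega, by rwa [hji]⟩]
          rw [Finset.mem_singleton, hji]
          exact ha
      · rintro (hu | hu)
        · by_cases hc : 2 ≤ j ∧ pf ℓ (j - 1)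
          · rw [if_pos hc, Finset.mem_singleton] at hu
            have hq : j - 1 + 1 = j := by omega
            exact ⟨j - 1, by omega, by omega, Or.inl ⟨hu, by rw [hq], hc.2⟩⟩
          · rw [if_neg hc] at hu
            exact absurd hu (Finset.notMem_empty u)
        · by_cases hc : j < ℓ ∧ ¬ pf ℓ j
          · rw [if_pos hc, Finset.mem_singleton] at hu
            exact ⟨j, by omega, hc.1, Or.inr ⟨hu, rfl, hc.2⟩⟩
          · rw [if_neg hc] at hu
            exact absurd hu (Finset.notMem_empty u)
    rw [hset, Finset.card_union_of_disjoint]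
    · split_ifs <;> simp
    · split_ifs with hA hB
      · rw [Finset.disjoint_singleton_left, Finset.mem_singleton]
        intro h
        have := winj (j - 1) (j + 1) (by omega) (by omega) h
        omega
      · exact Finset.disjoint_empty_right _
      · exact Finset.disjoint_empty_left _
      · exact Finset.disjoint_empty_left _
  -- in-degree of interior path vertices in D is 1
  have hDint : ∀ j, 2 ≤ j → j + 1 ≤ ℓ → D.inDeg (w j) = 1 := by
    intro j h2 hjl
    have hfl : (Finset.univ.filter fun u => D.dir u (w j) = true) = {v} := by
      ext u
      simp only [Finset.mem_filter, Finset.mem_univ, true_and, Finset.mem_singleton]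
      constructor
      · intro hd
        have hadj := D.adj_of_dir u (w j) hd
        rw [SimpleGraph.deleteEdges_adj] at hadj
        have hu : u ∈ G.neighborSet (w j) := hadj.1.symm
        rw [hnbr j (by omega) (by omega)] at hu
        simp only [Set.mem_insert_iff, Set.mem_singleton_iff] at hu
        rcases hu with hu | hu | hu
        · exfalso
          apply hadj.2
          refine ⟨j - 1, by omega, by omega, ?_⟩
          have hq : j - 1 + 1 = j := by omega
          rw [hu, hq, Sym2.eq_swap]
        · exact hu
        · exfalso
          apply hadj.2
          exact ⟨j, by omega, by omega, by rw [hu, Sym2.eq_swap]⟩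
      · rintro rfl
        exact hdirv j (by omega) (by omega)
    show (Finset.univ.filter fun u => D.dir u (w j) = true).card = 1
    rw [hfl, Finset.card_singleton]
  -- new in-degrees at path vertices
  have hd1 : D'.inDeg (w 1) = D.inDeg (w 1) := by
    rw [hkey, hincw 1 le_rfl (by omega)]
    have hpf1 : pf ℓ 1 := Or.inl ⟨by omega, rfl⟩
    rw [if_neg (fun h => by omega : ¬(2 ≤ 1 ∧ pf ℓ (1 - 1))),
      if_neg (fun h => h.2 hpf1)]
    simp
  have hdl' : D'.inDeg (w ℓ) = 2 := by
    rw [hkey, hincw ℓ (by omega) le_rfl, hl]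
    have hnpf : ¬ pf ℓ (ℓ - 1) := by unfold pf; omega
    rw [if_neg (fun h => hnpf h.2), if_neg (fun h => lt_irrefl ℓ h.1)]
  have hdint : ∀ j, 2 ≤ j → j + 1 ≤ ℓ →
      D'.inDeg (w j) = 1 + ((if pf ℓ (j - 1) then 1 else 0) + (if ¬ pf ℓ j then 1 else 0)) := by
    intro j h2 hjl
    rw [hkey, hincw j (by omega) (by omega), hDint j h2 hjl]
    rw [if_congr (and_iff_right h2) rfl rfl, if_congr (and_iff_right (by omega : j < ℓ)) rfl rfl]
  have hbound : ∀ j, 1 ≤ j → j ≤ ℓ → D'.inDeg (w j) ≤ 3 := by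
    intro j hj1 hjl
    by_cases hA : j = 1
    · subst hA; rw [hd1]; rcases h1 with h | h <;> omega
    by_cases hB : j = ℓ
    · subst hB; rw [hdl']; omega
    · rw [hdint j (by omega) (by omega)]
      split_ifs <;> omega
  have hvne : D'.inDeg v = D.inDeg v :=
    hnotpathv v (fun j _ hj h => hv j (by omega) h.symm)
  -- chain of distinct in-degrees along the path
  have hchain : ∀ j, 1 ≤ j → j < ℓ → D'.inDeg (w j) ≠ D'.inDeg (w (j + 1)) := by
    intro j hj1 hjℓ
    by_cases hA : j = 1
    · subst hA
      rw [hd1, hdint 2 le_rfl (by omega)]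
      have hpf1 : pf ℓ 1 := Or.inl ⟨by omega, rfl⟩
      have hpf2 : ¬ pf ℓ 2 := by unfold pf; omega
      rw [if_pos hpf1, if_pos hpf2]
      rcases h1 with h | h <;> omega
    by_cases hB : j = ℓ - 1
    · have hq : j + 1 = ℓ := by omega
      rw [hq, hdl', hdint j (by omega) (by omega)]
      have hpfa : pf ℓ (j - 1) := Or.inr ⟨by omega, by omega⟩
      have hpfb : ¬ pf ℓ j := by unfold pf; omega
      rw [if_pos hpfa, if_pos hpfb]
      omega
    · rw [hdint j (by omega) (by omega), hdint (j + 1) (by omega) (by omega)]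
      have hq : j + 1 - 1 = j := by omega
      rw [hq]
      unfold pf
      split_ifs <;> omega
  -- membership characterization of deleted edges
  have hSmem' : ∀ a b : V,
      s(a, b) ∈ {e : Sym2 V | ∃ i, 1 ≤ i ∧ i < ℓ ∧ e = s(w i, w (i + 1))} →
      ∃ i, 1 ≤ i ∧ i < ℓ ∧ ((a = w i ∧ b = w (i + 1)) ∨ (a = w (i + 1) ∧ b = w i)) := by
    rintro a b ⟨i, hi1, hi2, he⟩
    exact ⟨i, hi1, hi2, Sym2.eq_iff.mp he⟩
  -- main properness step at path vertices
  have hmain : ∀ j b, 1 ≤ j → j ≤ ℓ → G.Adj (w j) b → D'.inDeg (w j) ≠ D'.inDeg b := by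
    intro j b hj1 hjℓ hab
    have hb : b ∈ ({w (j - 1), v, w (j + 1)} : Set V) := by
      rw [← hnbr j hj1 hjℓ]; exact hab
    simp only [Set.mem_insert_iff, Set.mem_singleton_iff] at hb
    rcases hb with rfl | rfl | rfl
    · -- b = w (j - 1)
      by_cases h2 : 2 ≤ j
      · have hc := hchain (j - 1) (by omega) (by omega)
        rw [Nat.sub_add_cancel hj1] at hc
        exact hc.symm
      · have hj : j = 1 := by omega
        subst hj
        have h0 : D'.inDeg (w (1 - 1)) = D.inDeg (w (1 - 1)) := by
          refine hnotpathv _ (fun i hi1 hiℓ h => ?_)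
          have := winj (1 - 1) i (by omega) (by omega) h
          omega
        rw [hd1, h0]
        refine hproper (w 1) (w (1 - 1)) ?_
        rw [SimpleGraph.deleteEdges_adj]
        refine ⟨hab, fun hS => ?_⟩
        obtain ⟨i, hi1, hiℓ, hc | hc⟩ := hSmem' _ _ hS
        · have e1 := winj 1 i (by omega) (by omega) hc.1
          have e2 := winj (1 - 1) (i + 1) (by omega) (by omega) hc.2
          omega
        · have e1 := winj 1 (i + 1) (by omega) (by omega) hc.1
          have e2 := winj (1 - 1) i (by omega) (by omega) hc.2
          omega
    · -- b = v
      intro he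
      have hb3 := hbound j hj1 hjℓ
      rw [hvne] at he
      omega
    · -- b = w (j + 1)
      by_cases hcase : j < ℓ
      · exact hchain j hj1 hcase
      · have hj : j = ℓ := by omega
        rw [hj] at hab ⊢
        have h0 : D'.inDeg (w (ℓ + 1)) = D.inDeg (w (ℓ + 1)) := by
          refine hnotpathv _ (fun i hi1 hiℓ h => ?_)
          have := winj (ℓ + 1) i (by omega) (by omega) h
          omega
        rw [hdl', h0, ← hl]
        refine hproper (w ℓ) (w (ℓ + 1)) ?_
        rw [SimpleGraph.deleteEdges_adj]
        refine ⟨hab, fun hS => ?_⟩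
        obtain ⟨i, hi1, hiℓ, hc | hc⟩ := hSmem' _ _ hS
        · have e1 := winj ℓ i (by omega) (by omega) hc.1
          omega
        · have e2 := winj (ℓ + 1) i (by omega) (by omega) hc.2
          omega
  refine ⟨D', ?_, ?_, ?_⟩
  · -- Proper
    intro a b hab
    by_cases ha : ∃ j, 1 ≤ j ∧ j ≤ ℓ ∧ a = w j
    · obtain ⟨j, hj1, hj2, rfl⟩ := ha
      exact hmain j b hj1 hj2 hab
    by_cases hbp : ∃ j, 1 ≤ j ∧ j ≤ ℓ ∧ b = w j
    · obtain ⟨j, hj1, hj2, rfl⟩ := hbp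
      exact (hmain j a hj1 hj2 hab.symm).symm
    push_neg at ha hbp
    rw [hnotpathv a (fun j hj1 hj2 => ha j hj1 hj2),
      hnotpathv b (fun j hj1 hj2 => hbp j hj1 hj2)]
    refine hproper a b ?_
    rw [SimpleGraph.deleteEdges_adj]
    refine ⟨hab, fun hS => ?_⟩
    obtain ⟨i, hi1, hiℓ, hc | hc⟩ := hSmem' _ _ hS
    · exact ha i hi1 (by omega) hc.1
    · exact ha (i + 1) (by omega) (by omega) hc.1
  · -- k-orientation
    intro x
    by_cases hx : ∃ j, 1 ≤ j ∧ j ≤ ℓ ∧ x = w j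
    · obtain ⟨j, hj1, hj2, rfl⟩ := hx
      exact (hbound j hj1 hj2).trans hk
    · push_neg at hx
      rw [hnotpathv x (fun j hj1 hj2 => hx j hj1 hj2)]
      exact hkor x
  · -- extension
    intro a b hadj
    have hnp : ¬ pd w ℓ a b := by
      intro hp
      exact (SimpleGraph.deleteEdges_adj.mp hadj).2 (pd_mem_pS hp).1
    rw [hD'def]; show (D.dir a b || decide (pd w ℓ a b)) = D.dir a b
    simp [hnp]
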